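/- With the same setup, define Z = ⋃_{k ≥ 2} ⋂_{m ≥ 0} (τ^{-1}_*)^m(C_{k+m}) (equivalently the set of h with (τ¹_*)^m(h) ∈ C_{k+m} for all m ≥ 0, for some k ≥ 2). Then a nonzero h : ℤ* → ℤ/2ℤ satisfies lim_{n→∞} (τ¹_*)^n(h) = 0 (in the product topology, i.e., P((τ¹_*)^n(h)) → ∞) if and only if h ∈ ⋃_{j ≥ 0} (τ^{-1}_*)^j(Z). -/
import Mathlib


/-- The map `τ¹_*` on functions `ℤ* → ℤ/2ℤ` (encoded as functions on `ℤ` whose value at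
`0` is irrelevant and set to `0`). -/
def tau1 (h : ℤ → ZMod 2) : ℤ → ZMod 2 := fun i =>
  if i < -2 then h (-i) + h (i - 1) + h i + h (i + 1)
  else if i = -2 then h (-i) + h (-2) + h (-3)
  else if i = -1 then h (-i) + h (-2)
  else if i = 0 then 0
  else h (-i)

/-- The map `τ⁻¹_*` on functions `ℤ* → ℤ/2ℤ`. -/
def tauNeg1 (h : ℤ → ZMod 2) : ℤ → ZMod 2 := fun i =>
  if i < 0 then h (-i)
  else if i = 0 then 0
  else if i = 1 then h (-i) + h 2
  else if i = 2 then h (-i) + h 2 + h 3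
  else h (-i) + h (i - 1) + h i + h (i + 1)

/-- The cylinder set `C_k = {h : h(k) = h(-k-1) = 1, h(i) = 0 for -k-1 < i < k, i ≠ 0}`. -/
def Cyl (k : ℤ) : Set (ℤ → ZMod 2) :=
  {h | h k = 1 ∧ h (-k - 1) = 1 ∧ ∀ i : ℤ, -k - 1 < i → i < k → i ≠ 0 → h i = 0}

/-- `HasProx h k` says the proximity `P(h) = min {|i| : h(i) ≠ 0}` equals `k`. -/
def HasProx (h : ℤ → ZMod 2) (k : ℤ) : Prop :=
  (h k ≠ 0 ∨ h (-k) ≠ 0) ∧ ∀ i : ℤ, i ≠ 0 → |i| < k → h i = 0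

/-- `Z = ⋃_{k ≥ 2} ⋂_{m ≥ 0} (τ⁻¹_*)^m(C_{k+m})`: the set of `h` such that, for some
`k ≥ 2`, `(τ¹_*)^m(h) ∈ C_{k+m}` for all `m ≥ 0`. -/
def Zset : Set (ℤ → ZMod 2) :=
  {h | ∃ k : ℤ, 2 ≤ k ∧ ∀ m : ℕ, tau1^[m] h ∈ Cyl (k + m)}

/-- A nonzero `h : ℤ* → ℤ/2ℤ` satisfies `(τ¹_*)^n(h) → 0` in the product topology
(equivalently, the proximity `P((τ¹_*)^n(h)) → ∞`) if and only if
`h ∈ ⋃_{j ≥ 0} (τ⁻¹_*)^j(Z)`. -/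
lemma tau1_ge {h : ℤ → ZMod 2} {i : ℤ} (hi : 1 ≤ i) : tau1 h i = h (-i) := by
  unfold tau1
  rw [if_neg (by omega), if_neg (by omega), if_neg (by omega), if_neg (by omega)]

lemma tau1_m1 (h : ℤ → ZMod 2) : tau1 h (-1) = h 1 + h (-2) := by
  unfold tau1; norm_num

lemma tau1_m2 (h : ℤ → ZMod 2) : tau1 h (-2) = h 2 + h (-2) + h (-3) := by
  unfold tau1; norm_num

lemma tau1_lt {h : ℤ → ZMod 2} {i : ℤ} (hi : i < -2) :
    tau1 h i = h (-i) + h (i - 1) + h i + h (i + 1) := by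
  unfold tau1; rw [if_pos hi]

lemma tau1_zero (h : ℤ → ZMod 2) : tau1 h 0 = 0 := by
  unfold tau1; norm_num

lemma tauNeg1_neg {h : ℤ → ZMod 2} {i : ℤ} (hi : i < 0) : tauNeg1 h i = h (-i) := by
  unfold tauNeg1; rw [if_pos hi]

lemma tauNeg1_one (h : ℤ → ZMod 2) : tauNeg1 h 1 = h (-1) + h 2 := by
  unfold tauNeg1; norm_num

lemma tauNeg1_two (h : ℤ → ZMod 2) : tauNeg1 h 2 = h (-2) + h 2 + h 3 := by
  unfold tauNeg1; norm_num

lemma tauNeg1_gt {h : ℤ → ZMod 2} {i : ℤ} (hi : 2 < i) :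
    tauNeg1 h i = h (-i) + h (i - 1) + h i + h (i + 1) := by
  unfold tauNeg1
  rw [if_neg (by omega), if_neg (by omega), if_neg (by omega), if_neg (by omega)]

lemma tauNeg1_zero (h : ℤ → ZMod 2) : tauNeg1 h 0 = 0 := by
  unfold tauNeg1; norm_num

lemma tau1_tauNeg1 (h : ℤ → ZMod 2) (i : ℤ) (hi : i ≠ 0) : tau1 (tauNeg1 h) i = h i := by
  have c2 : ∀ a b : ZMod 2, a + b + b = a := by decide
  have c3 : ∀ a b c : ZMod 2, a + b + c + b + c = a := by decide
  have c4 : ∀ a b c d : ZMod 2, a + b + c + d + d + c + b = a := by decide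
  rcases lt_trichotomy i 0 with hneg | h0 | hpos
  · rcases lt_trichotomy i (-2) with hlt | he2 | hge
    · rw [tau1_lt (by omega), tauNeg1_gt (show 2 < -i by omega),
        tauNeg1_neg (show i - 1 < 0 by omega), tauNeg1_neg (show i < 0 by omega),
        tauNeg1_neg (show i + 1 < 0 by omega),
        show -(-i) = i by ring, show -(i - 1) = -i + 1 by ring,
        show -(i + 1) = -i - 1 by ring]
      exact c4 (h i) (h (-i - 1)) (h (-i)) (h (-i + 1))
    · subst he2
      rw [tau1_m2, tauNeg1_two, tauNeg1_neg (show (-2 : ℤ) < 0 by norm_num),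
        tauNeg1_neg (show (-3 : ℤ) < 0 by norm_num),
        show -(-2 : ℤ) = 2 by norm_num, show -(-3 : ℤ) = 3 by norm_num]
      exact c3 (h (-2)) (h 2) (h 3)
    · have : i = -1 := by omega
      subst this
      rw [tau1_m1, tauNeg1_one, tauNeg1_neg (show (-2 : ℤ) < 0 by norm_num),
        show -(-2 : ℤ) = 2 by norm_num]
      exact c2 (h (-1)) (h 2)
  · omega
  · rw [tau1_ge (by omega), tauNeg1_neg (by omega), show -(-i) = i by ring]

lemma tauNeg1_tau1 (h : ℤ → ZMod 2) (i : ℤ) (hi : i ≠ 0) : tauNeg1 (tau1 h) i = h i := by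
  have c2 : ∀ a b : ZMod 2, a + b + b = a := by decide
  have c3 : ∀ a b c : ZMod 2, a + b + c + b + c = a := by decide
  have c4 : ∀ a b c d : ZMod 2, a + b + c + d + d + c + b = a := by decide
  rcases lt_trichotomy i 0 with hneg | h0 | hpos
  · rw [tauNeg1_neg hneg, tau1_ge (by omega), show -(-i) = i by ring]
  · omega
  · rcases lt_trichotomy i 2 with h1 | h2 | hgt
    · have : i = 1 := by omega
      subst this
      rw [tauNeg1_one, tau1_m1, tau1_ge (show (1:ℤ) ≤ 2 by norm_num),
        show -(2:ℤ) = -2 by norm_num]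
      exact c2 (h 1) (h (-2))
    · subst h2
      rw [tauNeg1_two, tau1_m2, tau1_ge (show (1:ℤ) ≤ 2 by norm_num),
        tau1_ge (show (1:ℤ) ≤ 3 by norm_num),
        show -(2:ℤ) = -2 by norm_num, show -(3:ℤ) = -3 by norm_num]
      exact c3 (h 2) (h (-2)) (h (-3))
    · rw [tauNeg1_gt hgt, tau1_lt (show -i < -2 by omega),
        tau1_ge (show 1 ≤ i - 1 by omega), tau1_ge (show 1 ≤ i by omega),
        tau1_ge (show 1 ≤ i + 1 by omega),
        show -(-i) = i by ring, show -i - 1 = -(i + 1) by ring,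
        show -i + 1 = -(i - 1) by ring]
      exact c4 (h i) (h (-(i + 1))) (h (-i)) (h (-(i - 1)))

lemma tau1_congr {a b : ℤ → ZMod 2} (e : ∀ i : ℤ, i ≠ 0 → a i = b i) : tau1 a = tau1 b := by
  funext i
  rcases lt_trichotomy i 0 with hneg | h0 | hpos
  · rcases lt_trichotomy i (-2) with hlt | he2 | hge
    · rw [tau1_lt hlt, tau1_lt hlt, e (-i) (by omega), e (i - 1) (by omega), e i (by omega),
        e (i + 1) (by omega)]
    · subst he2
      rw [tau1_m2, tau1_m2, e 2 (by omega), e (-2) (by omega), e (-3) (by omega)]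
    · have : i = -1 := by omega
      subst this
      rw [tau1_m1, tau1_m1, e 1 (by omega), e (-2) (by omega)]
  · subst h0; rw [tau1_zero, tau1_zero]
  · rw [tau1_ge (by omega), tau1_ge (by omega), e (-i) (by omega)]

lemma tauNeg1_congr {a b : ℤ → ZMod 2} (e : ∀ i : ℤ, i ≠ 0 → a i = b i) :
    tauNeg1 a = tauNeg1 b := by
  funext i
  rcases lt_trichotomy i 0 with hneg | h0 | hpos
  · rw [tauNeg1_neg hneg, tauNeg1_neg hneg, e (-i) (by omega)]
  · subst h0; rw [tauNeg1_zero, tauNeg1_zero]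
  · rcases lt_trichotomy i 2 with h1 | h2 | hgt
    · have : i = 1 := by omega
      subst this
      rw [tauNeg1_one, tauNeg1_one, e (-1) (by omega), e 2 (by omega)]
    · subst h2
      rw [tauNeg1_two, tauNeg1_two, e (-2) (by omega), e 2 (by omega), e 3 (by omega)]
    · rw [tauNeg1_gt hgt, tauNeg1_gt hgt, e (-i) (by omega), e (i - 1) (by omega),
        e i (by omega), e (i + 1) (by omega)]

lemma tau1_iter_congr {a b : ℤ → ZMod 2} (e : ∀ i : ℤ, i ≠ 0 → a i = b i) (n : ℕ) :
    ∀ i : ℤ, i ≠ 0 → tau1^[n] a i = tau1^[n] b i := by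
  cases n with
  | zero => exact e
  | succ n =>
      intro i hi
      rw [Function.iterate_succ_apply, Function.iterate_succ_apply, tau1_congr e]

lemma tauNeg1_iter_congr {a b : ℤ → ZMod 2} (e : ∀ i : ℤ, i ≠ 0 → a i = b i) (n : ℕ) :
    ∀ i : ℤ, i ≠ 0 → tauNeg1^[n] a i = tauNeg1^[n] b i := by
  cases n with
  | zero => exact e
  | succ n =>
      intro i hi
      rw [Function.iterate_succ_apply, Function.iterate_succ_apply, tauNeg1_congr e]

lemma tauNeg1_tau1_iter (h : ℤ → ZMod 2) (n : ℕ) :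
    ∀ i : ℤ, i ≠ 0 → tauNeg1^[n] (tau1^[n] h) i = h i := by
  induction n with
  | zero => intro i _; rfl
  | succ n ih =>
      intro i hi
      rw [Function.iterate_succ_apply, Function.iterate_succ_apply']
      have := tauNeg1_iter_congr (fun j hj => tauNeg1_tau1 (tau1^[n] h) j hj) n i hi
      rw [this]; exact ih i hi

lemma tau1_tauNeg1_iter (h : ℤ → ZMod 2) (n : ℕ) :
    ∀ i : ℤ, i ≠ 0 → tau1^[n] (tauNeg1^[n] h) i = h i := by
  induction n with
  | zero => intro i _; rfl
  | succ n ih =>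
      intro i hi
      rw [Function.iterate_succ_apply, Function.iterate_succ_apply']
      have := tau1_iter_congr (fun j hj => tau1_tauNeg1 (tauNeg1^[n] h) j hj) n i hi
      rw [this]; exact ih i hi

lemma tauNeg1_of_zero {g : ℤ → ZMod 2} (hg : ∀ i : ℤ, i ≠ 0 → g i = 0) :
    ∀ i : ℤ, tauNeg1 g i = 0 := by
  intro i
  rcases lt_trichotomy i 0 with hneg | h0 | hpos
  · rw [tauNeg1_neg hneg, hg (-i) (by omega)]
  · subst h0; exact tauNeg1_zero g
  · rcases lt_trichotomy i 2 with h1 | h2 | hgt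
    · have : i = 1 := by omega
      subst this
      rw [tauNeg1_one, hg (-1) (by omega), hg 2 (by omega), add_zero]
    · subst h2
      rw [tauNeg1_two, hg (-2) (by omega), hg 2 (by omega), hg 3 (by omega), add_zero, add_zero]
    · rw [tauNeg1_gt hgt, hg (-i) (by omega), hg (i - 1) (by omega), hg i (by omega),
        hg (i + 1) (by omega), add_zero, add_zero, add_zero]

lemma tau1_iter_zero_at (h : ℤ → ZMod 2) (hg : h 0 = 0) (n : ℕ) : tau1^[n] h 0 = 0 := by
  cases n with
  | zero => exact hg
  | succ n => rw [Function.iterate_succ_apply', tau1_zero]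

lemma tauNeg1_iter_zero_at (h : ℤ → ZMod 2) (hg : h 0 = 0) (n : ℕ) : tauNeg1^[n] h 0 = 0 := by
  cases n with
  | zero => exact hg
  | succ n => rw [Function.iterate_succ_apply', tauNeg1_zero]

section Vals
variable {h : ℤ → ZMod 2} {k : ℤ}

lemma vals_zero (hk : 2 ≤ k) (hz : ∀ i : ℤ, i ≠ 0 → -k < i → i < k → h i = 0) :
    ∀ i : ℤ, i ≠ 0 → -(k - 1) < i → i < k → tau1 h i = 0 := by
  intro i hi hlo hhi
  rcases lt_trichotomy i 0 with hneg | h0 | hpos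
  · rcases lt_trichotomy i (-2) with hlt | he2 | hge
    · rw [tau1_lt hlt, hz (-i) (by omega) (by omega) (by omega),
        hz (i - 1) (by omega) (by omega) (by omega), hz i (by omega) (by omega) (by omega),
        hz (i + 1) (by omega) (by omega) (by omega), add_zero, add_zero, add_zero]
    · subst he2
      rw [tau1_m2, hz 2 (by omega) (by omega) (by omega),
        hz (-2) (by omega) (by omega) (by omega), hz (-3) (by omega) (by omega) (by omega),
        add_zero, add_zero]
    · have : i = -1 := by omega
      subst this
      rw [tau1_m1, hz 1 (by omega) (by omega) (by omega),
        hz (-2) (by omega) (by omega) (by omega), add_zero]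
  · omega
  · rw [tau1_ge (by omega), hz (-i) (by omega) (by omega) (by omega)]

lemma vals_k (hk : 2 ≤ k) : tau1 h k = h (-k) := tau1_ge (by omega)

lemma vals_k1 (hk : 2 ≤ k) : tau1 h (k + 1) = h (-(k + 1)) := tau1_ge (by omega)

lemma vals_mk1 (hk : 2 ≤ k) (hz : ∀ i : ℤ, i ≠ 0 → -k < i → i < k → h i = 0) :
    tau1 h (-(k - 1)) = h (-k) := by
  rcases lt_trichotomy k 3 with h2 | h3 | h4
  · have : k = 2 := by omega
    subst this
    rw [show -((2 : ℤ) - 1) = -1 by norm_num, tau1_m1, hz 1 (by omega) (by omega) (by omega),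
      show -(2 : ℤ) = -2 by norm_num, zero_add]
  · subst h3
    rw [show -((3 : ℤ) - 1) = -2 by norm_num, tau1_m2, hz 2 (by omega) (by omega) (by omega),
      hz (-2) (by omega) (by omega) (by omega), show -(3 : ℤ) = -3 by norm_num, zero_add,
      zero_add]
  · rw [tau1_lt (by omega), show -(-(k - 1)) = k - 1 by ring, show -(k - 1) - 1 = -k by ring,
      show -(k - 1) + 1 = -(k - 2) by ring, hz (k - 1) (by omega) (by omega) (by omega),
      hz (-(k - 1)) (by omega) (by omega) (by omega),
      hz (-(k - 2)) (by omega) (by omega) (by omega), zero_add, add_zero, add_zero]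

lemma vals_mk (hk : 2 ≤ k) (hz : ∀ i : ℤ, i ≠ 0 → -k < i → i < k → h i = 0) :
    tau1 h (-k) = h k + h (-(k + 1)) + h (-k) := by
  rcases lt_trichotomy k 3 with h2 | h3 | h4
  · have : k = 2 := by omega
    subst this
    rw [tau1_m2, show -((2 : ℤ) + 1) = -3 by norm_num]
    ring
  · have hlt : k = 3 ∨ 3 < k := by omega
    have hklt : -k < -2 := by omega
    rw [tau1_lt hklt, show -(-k) = k by ring, show -k - 1 = -(k + 1) by ring,
      hz (-k + 1) (by omega) (by omega) (by omega), add_zero]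
  · have hklt : -k < -2 := by omega
    rw [tau1_lt hklt, show -(-k) = k by ring, show -k - 1 = -(k + 1) by ring,
      hz (-k + 1) (by omega) (by omega) (by omega), add_zero]

lemma vals_mkk1 (hk : 2 ≤ k) :
    tau1 h (-(k + 1)) = h (k + 1) + h (-(k + 2)) + h (-(k + 1)) + h (-k) := by
  rw [tau1_lt (show -(k + 1) < -2 by omega), show -(-(k + 1)) = k + 1 by ring,
    show -(k + 1) - 1 = -(k + 2) by ring, show -(k + 1) + 1 = -k by ring]

end Vals

section ABC
variable {h : ℤ → ZMod 2} {k : ℤ}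

lemma lemA (hk : 2 ≤ k) (hz : ∀ i : ℤ, i ≠ 0 → -k < i → i < k → h i = 0)
    (hm : h (-k) = 1) :
    (∀ i : ℤ, i ≠ 0 → -(k - 1) < i → i < k - 1 → tau1 h i = 0) ∧ tau1 h (-(k - 1)) = 1 :=
  ⟨fun i hi a b => vals_zero hk hz i hi a (by omega), by rw [vals_mk1 hk hz, hm]⟩

lemma lemB (hk : 2 ≤ k) (hz : ∀ i : ℤ, i ≠ 0 → -k < i → i < k → h i = 0)
    (h1 : h k = 1) (h2 : h (-k) = 0) (h3 : h (-(k + 1)) = 0) :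
    (∀ i : ℤ, i ≠ 0 → -k < i → i < k → tau1 h i = 0) ∧ tau1 h (-k) = 1 := by
  constructor
  · intro i hi a b
    by_cases hie : i = -(k - 1)
    · rw [hie, vals_mk1 hk hz, h2]
    · exact vals_zero hk hz i hi (by omega) b
  · rw [vals_mk hk hz, h1, h2, h3, add_zero, add_zero]

lemma lemC (hk : 2 ≤ k) (hz : ∀ i : ℤ, i ≠ 0 → -k < i → i < k → h i = 0)
    (h1 : h k = 1) (h2 : h (-k) = 0) (h3 : h (-(k + 1)) = 1) :
    (∀ i : ℤ, i ≠ 0 → -(k + 1) < i → i < k + 1 → tau1 h i = 0) ∧ tau1 h (k + 1) = 1 := by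
  constructor
  · intro i hi a b
    by_cases hie : i = k
    · rw [hie, vals_k hk, h2]
    · by_cases hie2 : i = -(k - 1)
      · rw [hie2, vals_mk1 hk hz, h2]
      · by_cases hie3 : i = -k
        · rw [hie3, vals_mk hk hz, h1, h2, h3, add_zero]
          decide
        · exact vals_zero hk hz i hi (by omega) (by omega)
  · rw [vals_k1 hk, h3]

end ABC

lemma descend : ∀ t : ℕ, ∀ g : ℤ → ZMod 2, ∀ k : ℤ, k = 2 + (t : ℤ) →
    (∀ i : ℤ, i ≠ 0 → -k < i → i < k → g i = 0) → g (-k) = 1 →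
    ∃ s : ℕ, tau1^[s] g 2 ≠ 0 ∨ tau1^[s] g (-2) ≠ 0 := by
  intro t
  induction t with
  | zero =>
      intro g k hk hz hm
      refine ⟨0, Or.inr ?_⟩
      have : k = 2 := by omega
      subst this
      simp only [Function.iterate_zero, id_eq]
      rw [show -(2:ℤ) = -2 by norm_num] at hm
      rw [hm]; decide
  | succ t ih =>
      intro g k hk hz hm
      have hk3 : 3 ≤ k := by omega
      obtain ⟨z1, z2⟩ := lemA (by omega) hz hm
      obtain ⟨s, hs⟩ := ih (tau1 g) (k - 1) (by push_cast at hk ⊢; omega) z1 z2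
      refine ⟨s + 1, ?_⟩
      rw [Function.iterate_succ_apply]
      exact hs

lemma keyC (h : ℤ → ZMod 2) (M : ℕ)
    (hyp : ∀ n : ℕ, M ≤ n → tau1^[n] h 2 = 0 ∧ tau1^[n] h (-2) = 0)
    (n : ℕ) (hn : M ≤ n) (k : ℤ) (hk : 3 ≤ k)
    (hz : ∀ i : ℤ, i ≠ 0 → -k < i → i < k → tau1^[n] h i = 0)
    (hw : tau1^[n] h k ≠ 0 ∨ tau1^[n] h (-k) ≠ 0) :
    tau1^[n] h k = 1 ∧ tau1^[n] h (-k) = 0 ∧ tau1^[n] h (-(k + 1)) = 1 := by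
  have hone : ∀ a : ZMod 2, a ≠ 0 → a = 1 := by decide
  set g := tau1^[n] h with hg
  have contra : ∀ k' : ℤ, 2 ≤ k' →
      (∀ i : ℤ, i ≠ 0 → -k' < i → i < k' → tau1 g i = 0) → tau1 g (-k') = 1 → False := by
    intro k' hk' z1 z2
    obtain ⟨s, hs⟩ := descend (k' - 2).toNat (tau1 g) k' (by omega) z1 z2
    have he : tau1^[s] (tau1 g) = tau1^[s + (n + 1)] h := by
      rw [Function.iterate_add_apply, Function.iterate_succ_apply', hg]
    rw [he] at hs
    obtain ⟨e1, e2⟩ := hyp (s + (n + 1)) (by omega)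
    rcases hs with hs | hs
    · exact hs e1
    · exact hs e2
  by_cases hmk : g (-k) = 0
  · have hgk : g k = 1 := by
      rcases hw with hw | hw
      · exact hone _ hw
      · exact absurd hmk hw
  -- now split on h (-(k+1))
    by_cases hmk1 : g (-(k + 1)) = 0
    · exfalso
      obtain ⟨z1, z2⟩ := lemB (by omega) hz hgk hmk hmk1
      exact contra k (by omega) z1 z2
    · exact ⟨hgk, hmk, hone _ hmk1⟩
  · exfalso
    obtain ⟨z1, z2⟩ := lemA (by omega) hz (hone _ hmk)
    exact contra (k - 1) (by omega) z1 z2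

lemma exists_prox (g : ℤ → ZMod 2) (i0 : ℤ) (hi0 : i0 ≠ 0) (hne : g i0 ≠ 0) :
    ∃ k : ℤ, 1 ≤ k ∧ (g k ≠ 0 ∨ g (-k) ≠ 0) ∧
      ∀ i : ℤ, i ≠ 0 → -k < i → i < k → g i = 0 := by
  classical
  have hP : ∃ n : ℕ, 0 < (n : ℤ) ∧ (g (n : ℤ) ≠ 0 ∨ g (-(n : ℤ)) ≠ 0) := by
    refine ⟨i0.natAbs, by omega, ?_⟩
    rcases Int.natAbs_eq i0 with he | he
    · left; rwa [← he]
    · right; rw [show -(i0.natAbs : ℤ) = i0 by omega]; exact hne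
  obtain ⟨hpos, hwit⟩ := Nat.find_spec hP
  refine ⟨(Nat.find hP : ℤ), by exact_mod_cast hpos, hwit, ?_⟩
  intro i hi hlo hhi
  have hlt : i.natAbs < Nat.find hP := by omega
  have := Nat.find_min hP hlt
  push_neg at this
  have h2 := this (by omega)
  rcases Int.natAbs_eq i with he | he
  · rw [he]; exact h2.1
  · rw [he]; exact h2.2

lemma tauNeg1_iter_of_zero : ∀ (n : ℕ) (g : ℤ → ZMod 2), (∀ i : ℤ, i ≠ 0 → g i = 0) →
    ∀ i : ℤ, i ≠ 0 → tauNeg1^[n] g i = 0 := by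
  intro n
  induction n with
  | zero => intro g hg; exact hg
  | succ n ih =>
      intro g hg i hi
      rw [Function.iterate_succ_apply]
      exact ih (tauNeg1 g) (fun j _ => tauNeg1_of_zero hg j) i hi


theorem stmt15 (h : ℤ → ZMod 2) (h0 : h 0 = 0) (hne : h ≠ fun _ => 0) :
    (∀ N : ℤ, ∃ M : ℕ, ∀ n ≥ M, ∀ i : ℤ, i ≠ 0 → |i| ≤ N → tau1^[n] h i = 0) ↔
      ∃ (j : ℕ) (z : ℤ → ZMod 2), z ∈ Zset ∧ h = tauNeg1^[j] z := by
  constructor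
  · intro hlim
    obtain ⟨M, hM⟩ := hlim 2
    have hyp2 : ∀ n : ℕ, M ≤ n → tau1^[n] h 2 = 0 ∧ tau1^[n] h (-2) = 0 := fun n hn =>
      ⟨hM n hn 2 (by norm_num) (abs_le.mpr ⟨by norm_num, by norm_num⟩),
       hM n hn (-2) (by norm_num) (abs_le.mpr ⟨by norm_num, by norm_num⟩)⟩
    have hex : ∃ i : ℤ, i ≠ 0 ∧ tau1^[M] h i ≠ 0 := by
      by_contra hc
      push_neg at hc
      apply hne
      funext i
      by_cases hi : i = 0
      · rw [hi]; exact h0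
      · have h1 := tauNeg1_tau1_iter h M i hi
        rw [← h1]
        exact tauNeg1_iter_of_zero M (tau1^[M] h) (fun j hj => hc j hj) i hi
    obtain ⟨i0, hi0ne, hi0⟩ := hex
    obtain ⟨k, hk1, hw, hz⟩ := exists_prox (tau1^[M] h) i0 hi0ne hi0
    have hk3 : 3 ≤ k := by
      by_contra hc
      have w1 : tau1^[M] h k = 0 :=
        hM M le_rfl k (by omega) (abs_le.mpr ⟨by omega, by omega⟩)
      have w2 : tau1^[M] h (-k) = 0 :=
        hM M le_rfl (-k) (by omega) (abs_le.mpr ⟨by omega, by omega⟩)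
      rcases hw with hw | hw
      · exact hw w1
      · exact hw w2
    have main : ∀ m : ℕ,
        (∀ i : ℤ, i ≠ 0 → -(k + (m : ℤ)) < i → i < k + (m : ℤ) → tau1^[M + m] h i = 0) ∧
        tau1^[M + m] h (k + (m : ℤ)) = 1 ∧ tau1^[M + m] h (-(k + (m : ℤ))) = 0 ∧
        tau1^[M + m] h (-(k + (m : ℤ) + 1)) = 1 := by
      intro m
      induction m with
      | zero =>
          obtain ⟨a1, a2, a3⟩ := keyC h M hyp2 M le_rfl k hk3 hz hw
          rw [show k + ((0 : ℕ) : ℤ) = k by push_cast; ring]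
          exact ⟨hz, a1, a2, a3⟩
      | succ m ih =>
          obtain ⟨z0, e1, e2, e3⟩ := ih
          obtain ⟨z1, z2⟩ := lemC (show 2 ≤ k + (m : ℤ) by omega) z0 e1 e2 e3
          have hiter : tau1 (tau1^[M + m] h) = tau1^[M + (m + 1)] h := by
            rw [show M + (m + 1) = (M + m) + 1 from rfl, Function.iterate_succ_apply']
          rw [hiter] at z1 z2
          obtain ⟨a1, a2, a3⟩ := keyC h M hyp2 (M + (m + 1)) (by omega) (k + (m : ℤ) + 1)
            (by omega) z1 (Or.inl (by rw [z2]; decide))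
          have ec : k + ((m + 1 : ℕ) : ℤ) = k + (m : ℤ) + 1 := by push_cast; ring
          rw [ec]
          exact ⟨z1, a1, a2, a3⟩
    refine ⟨M, tau1^[M] h, ⟨k, by omega, ?_⟩, ?_⟩
    · intro m
      obtain ⟨z0, e1, e2, e3⟩ := main m
      have hiter : tau1^[m] (tau1^[M] h) = tau1^[M + m] h := by
        rw [Nat.add_comm, Function.iterate_add_apply]
      rw [hiter]
      refine ⟨e1, ?_, ?_⟩
      · rw [show -(k + (m : ℤ)) - 1 = -(k + (m : ℤ) + 1) by ring]
        exact e3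
      · intro i hlo hhi hi
        by_cases hie : i = -(k + (m : ℤ))
        · rw [hie]; exact e2
        · exact z0 i hi (by omega) hhi
    · funext i
      by_cases hi : i = 0
      · rw [hi, h0, tauNeg1_iter_zero_at (tau1^[M] h) (tau1_iter_zero_at h h0 M) M]
      · exact (tauNeg1_tau1_iter h M i hi).symm
  · rintro ⟨j, z, ⟨k, hk2, hcyl⟩, rfl⟩
    intro N
    refine ⟨j + (N - k).toNat + 1, ?_⟩
    intro n hn i hi hiN
    obtain ⟨m, rfl⟩ : ∃ m : ℕ, n = m + j := ⟨n - j, by omega⟩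
    have habs := abs_le.mp hiN
    have hkm : N < k + (m : ℤ) := by omega
    have hrw : tau1^[m + j] (tauNeg1^[j] z) i = tau1^[m] z i := by
      rw [Function.iterate_add_apply]
      exact tau1_iter_congr (fun p hp => tau1_tauNeg1_iter z j p hp) m i hi
    rw [hrw]
    obtain ⟨c1, c2, c3⟩ := hcyl m
    exact c3 i (by omega) (by omega) hi
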